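/- Let n ≥ 2 and work in ℚ^n with standard basis e_1, …, e_n. Define α_i = e_i − e_{i+1} for 1 ≤ i ≤ n−1 and α_n = e_{n−1} + e_n. Then (α_1, …, α_n) is a basis of ℚ^n, and for every integer k with 1 ≤ k ≤ n−2, the number of elements of the set Φ⁺ = {e_i − e_j : 1 ≤ i < j ≤ n} ∪ {e_i + e_j : 1 ≤ i < j ≤ n} whose coordinate at α_k in this basis equals 0 is k(k−1)/2 + (n−k)(n−1−k). -/

import Mathlib

open Finset

section Aux

variable {n : ℕ}

/-- linear functional given by weights -/
noncomputable def fl (w : Fin n → ℚ) : (Fin n → ℚ) →ₗ[ℚ] ℚ :=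
  ∑ i, w i • LinearMap.proj i

lemma fl_single (w : Fin n → ℚ) (p : Fin n) : fl w (Pi.single p 1) = w p := by
  simp [fl, LinearMap.proj]
  rw [Finset.sum_eq_single p]
  · simp
  · intro b _ hb; simp [Pi.single_apply, hb]
  · simp

/-- weights for the coordinate functionals -/
noncomputable def wt (n : ℕ) (k : Fin n) : Fin n → ℚ := fun i =>
  if k.val + 2 < n then (if i.val ≤ k.val then 1 else 0)
  else if k.val + 1 < n then (if i.val = n - 1 then -(1/2) else 1/2)
  else 1/2

/-- the simple roots of type D_n -/
noncomputable def al (n : ℕ) (hn : 2 ≤ n) (i : Fin n) : Fin n → ℚ :=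
  if h : i.val + 1 < n
    then (Pi.single i 1 : Fin n → ℚ) - Pi.single (⟨i.val + 1, h⟩ : Fin n) 1
    else (Pi.single (⟨n - 2, Nat.sub_lt (by omega) (by omega)⟩ : Fin n) 1 : Fin n → ℚ)
      + Pi.single (⟨n - 1, Nat.sub_lt (by omega) (by omega)⟩ : Fin n) 1

lemma dual_al (hn : 2 ≤ n) (k i : Fin n) :
    fl (wt n k) (al n hn i) = if i = k then 1 else 0 := by
  have hk := k.isLt
  have hi := i.isLt
  rw [al]
  split_ifs with h h1 h2 <;>
    [skip; skip; rw [map_add, fl_single, fl_single]; rw [map_add, fl_single, fl_single]] <;>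
    [rw [map_sub, fl_single, fl_single]; rw [map_sub, fl_single, fl_single]; skip; skip] <;>
    simp only [wt, Fin.ext_iff, Fin.val_mk] at * <;>
    split_ifs <;> norm_num <;> omega

lemma al_li (hn : 2 ≤ n) : LinearIndependent ℚ (al n hn) := by
  rw [Fintype.linearIndependent_iff]
  intro g hg i
  have h2 := congrArg (fl (wt n i)) hg
  rw [map_sum, map_zero] at h2
  simp only [map_smul, dual_al hn, smul_eq_mul, mul_ite, mul_one, mul_zero] at h2
  rwa [Finset.sum_ite_eq' Finset.univ i g, if_pos (Finset.mem_univ i)] at h2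

/-- counting pairs in `Fin n × Fin n` reduces to counting in `range n`. -/
lemma card_pairs (n : ℕ) (Q : ℕ → ℕ → Prop) [DecidableRel Q] :
    (Finset.univ.filter fun p : Fin n × Fin n => Q p.1.val p.2.val).card
      = ∑ a ∈ Finset.range n, ((Finset.range n).filter (Q a)).card := by
  rw [Finset.card_filter, Fintype.sum_prod_type]
  rw [Fin.sum_univ_eq_sum_range (fun a => ∑ b : Fin n, if Q a b.val then 1 else 0) n]
  refine Finset.sum_congr rfl fun a _ => ?_
  rw [Finset.card_filter]
  exact Fin.sum_univ_eq_sum_range (fun b => if Q a b then 1 else 0) n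

lemma count_A (n K : ℕ) (hK : K < n) :
    2 * (Finset.univ.filter fun p : Fin n × Fin n =>
        p.1.val < p.2.val ∧ p.2.val ≤ K).card = (K + 1) * K := by
  rw [card_pairs n (fun a b => a < b ∧ b ≤ K)]
  have h1 : ∀ a, ((Finset.range n).filter fun b => a < b ∧ b ≤ K) = Finset.Ioc a K := by
    intro a; ext b; simp [Finset.mem_Ioc]; omega
  simp only [h1, Nat.card_Ioc]
  rw [← Finset.sum_subset (Finset.range_subset_range.2 (by omega : K + 1 ≤ n))
    (fun x _ hx => by simp at hx ⊢; omega)]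
  have h2 : ∑ x ∈ Finset.range (K + 1), (K - x) = ∑ x ∈ Finset.range (K + 1), x := by
    rw [← Finset.sum_range_reflect (fun j => j) (K + 1)]
    exact Finset.sum_congr rfl fun x hx => by simp at hx; omega
  rw [h2]
  calc 2 * ∑ x ∈ Finset.range (K + 1), x = (∑ x ∈ Finset.range (K + 1), x) * 2 := by ring
    _ = (K + 1) * (K + 1 - 1) := Finset.sum_range_id_mul_two (K + 1)
    _ = (K + 1) * K := by norm_num

lemma count_B (n K : ℕ) (hK : K < n) :
    2 * (Finset.univ.filter fun p : Fin n × Fin n =>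
        K < p.1.val ∧ p.1.val < p.2.val).card = (n - 1 - K) * (n - 2 - K) := by
  rw [card_pairs n (fun a b => K < a ∧ a < b)]
  have h1 : ∀ a, ((Finset.range n).filter fun b => K < a ∧ a < b)
      = if K < a then Finset.Ico (a + 1) n else ∅ := by
    intro a; split_ifs with h <;> ext b <;> simp [Finset.mem_Ico, h] <;> omega
  simp only [h1, apply_ite Finset.card, Nat.card_Ico, Finset.card_empty]
  rw [Finset.range_eq_Ico, ← Finset.sum_Ico_consecutive _ (by omega : 0 ≤ K + 1)
    (by omega : K + 1 ≤ n)]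
  rw [Finset.sum_eq_zero (fun a ha => by simp at ha; simp; omega), zero_add]
  rw [Finset.sum_Ico_eq_sum_range]
  have h2 : ∀ a ∈ Finset.range (n - (K + 1)),
      (if K < K + 1 + a then n - (K + 1 + a + 1) else 0) = n - (K + 1) - 1 - a := by
    intro a ha; rw [if_pos (by omega)]; simp at ha; omega
  rw [Finset.sum_congr rfl h2,
    Finset.sum_range_reflect (fun j => j) (n - (K + 1))]
  have h3 : n - (K + 1) = n - 1 - K := by omega
  calc 2 * ∑ x ∈ Finset.range (n - (K + 1)), x
      = (∑ x ∈ Finset.range (n - (K + 1)), x) * 2 := by ring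
    _ = (n - (K + 1)) * (n - (K + 1) - 1) := Finset.sum_range_id_mul_two _
    _ = (n - 1 - K) * (n - 2 - K) := by rw [h3]; congr 1; omega

lemma inj1 {a b : Fin n × Fin n} (ha : a.1 < a.2) (hb : b.1 < b.2)
    (h : (Pi.single a.1 1 : Fin n → ℚ) - Pi.single a.2 1
       = (Pi.single b.1 1 : Fin n → ℚ) - Pi.single b.2 1) : a = b := by
  have e1 := congrFun h a.1
  have e2 := congrFun h a.2
  rw [Fin.lt_def] at ha hb
  rw [Prod.ext_iff, Fin.ext_iff, Fin.ext_iff]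
  simp only [Pi.sub_apply, Pi.single_apply, Fin.ext_iff] at e1 e2
  split_ifs at e1 e2 <;> norm_num at e1 <;> norm_num at e2 <;> omega

lemma inj2 {a b : Fin n × Fin n} (ha : a.1 < a.2) (hb : b.1 < b.2)
    (h : (Pi.single a.1 1 : Fin n → ℚ) + Pi.single a.2 1
       = (Pi.single b.1 1 : Fin n → ℚ) + Pi.single b.2 1) : a = b := by
  have e1 := congrFun h a.1
  have e2 := congrFun h a.2
  rw [Fin.lt_def] at ha hb
  rw [Prod.ext_iff, Fin.ext_iff, Fin.ext_iff]
  simp only [Pi.add_apply, Pi.single_apply, Fin.ext_iff] at e1 e2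
  split_ifs at e1 e2 <;> norm_num at e1 <;> norm_num at e2 <;> omega

end Aux

theorem stmt_15 (n : ℕ) (hn : 2 ≤ n) :
    ∃ B : Module.Basis (Fin n) ℚ (Fin n → ℚ),
      (∀ i : Fin n,
        B i = if h : i.val + 1 < n
          then (Pi.single i 1 : Fin n → ℚ) - Pi.single (⟨i.val + 1, h⟩ : Fin n) 1
          else (Pi.single (⟨n - 2, by omega⟩ : Fin n) 1 : Fin n → ℚ)
            + Pi.single (⟨n - 1, by omega⟩ : Fin n) 1) ∧
      ∀ k : Fin n, k.val + 1 ≤ n - 2 →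
        (((((Finset.univ.filter fun p : Fin n × Fin n => p.1 < p.2).image
            fun p => (Pi.single p.1 1 : Fin n → ℚ) - Pi.single p.2 1) ∪
          ((Finset.univ.filter fun p : Fin n × Fin n => p.1 < p.2).image
            fun p => (Pi.single p.1 1 : Fin n → ℚ) + Pi.single p.2 1)).filter
          fun v => B.repr v k = 0).card)
        = (k.val + 1) * k.val / 2 + (n - (k.val + 1)) * (n - 1 - (k.val + 1)) := by
  have hne : Nonempty (Fin n) := ⟨⟨0, by omega⟩⟩
  have card_eq : Fintype.card (Fin n) = Module.finrank ℚ (Fin n → ℚ) := by simp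
  set B := basisOfLinearIndependentOfCardEqFinrank (al_li hn) card_eq with hB
  have hBa : ∀ i, B i = al n hn i := fun i => by
    rw [hB, coe_basisOfLinearIndependentOfCardEqFinrank]
  refine ⟨B, fun i => by rw [hBa, al], ?_⟩
  intro k hk
  have hkn : k.val + 2 < n := by omega
  -- the coordinate functional
  have hcoord : B.coord k = fl (wt n k) := by
    apply B.ext
    intro i
    rw [Module.Basis.coord_apply, Module.Basis.repr_self, Finsupp.single_apply, hBa, dual_al hn]
  have hco : ∀ v : Fin n → ℚ, B.repr v k = fl (wt n k) v := fun v => by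
    rw [← Module.Basis.coord_apply, hcoord]
  have hwt : ∀ p : Fin n, wt n k p = if p.val ≤ k.val then 1 else 0 := fun p => by
    rw [wt, if_pos hkn]
  set s := Finset.univ.filter fun p : Fin n × Fin n => p.1 < p.2 with hs
  set f1 : Fin n × Fin n → (Fin n → ℚ) := fun p => Pi.single p.1 1 - Pi.single p.2 1 with hf1
  set f2 : Fin n × Fin n → (Fin n → ℚ) := fun p => Pi.single p.1 1 + Pi.single p.2 1 with hf2
  have hmem : ∀ p : Fin n × Fin n, p ∈ s ↔ p.1 < p.2 := fun p => by
    simp [hs]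
  -- disjointness of the two families
  have hdisj : Disjoint (s.image f1) (s.image f2) := by
    rw [Finset.disjoint_left]
    rintro v hv1 hv2
    simp only [Finset.mem_image] at hv1 hv2
    obtain ⟨p, -, rfl⟩ := hv1
    obtain ⟨q, -, hq⟩ := hv2
    have h0 := congrArg (fl (fun _ => (1 : ℚ))) hq
    rw [hf1, hf2] at h0
    simp only [map_add, map_sub, fl_single] at h0
    norm_num at h0
  rw [Finset.filter_union,
    Finset.card_union_of_disjoint
      (hdisj.mono (Finset.filter_subset _ _) (Finset.filter_subset _ _)),
    Finset.filter_image, Finset.filter_image,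
    Finset.card_image_of_injOn (fun a ha b hb hab =>
      inj1 ((hmem a).1 (Finset.mem_of_mem_filter a ha))
        ((hmem b).1 (Finset.mem_of_mem_filter b hb)) hab),
    Finset.card_image_of_injOn (fun a ha b hb hab =>
      inj2 ((hmem a).1 (Finset.mem_of_mem_filter a ha))
        ((hmem b).1 (Finset.mem_of_mem_filter b hb)) hab)]
  -- compute the coordinate on each root
  have hv1 : ∀ p : Fin n × Fin n, B.repr (f1 p) k
      = (if p.1.val ≤ k.val then (1:ℚ) else 0) - (if p.2.val ≤ k.val then 1 else 0) := by
    intro p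
    rw [hco, hf1]
    simp only [map_sub, fl_single, hwt]
  have hv2 : ∀ p : Fin n × Fin n, B.repr (f2 p) k
      = (if p.1.val ≤ k.val then (1:ℚ) else 0) + (if p.2.val ≤ k.val then 1 else 0) := by
    intro p
    rw [hco, hf2]
    simp only [map_add, fl_single, hwt]
  -- identify the two filtered sets
  have hset1 : s.filter (fun p => B.repr (f1 p) k = 0)
      = (Finset.univ.filter fun p : Fin n × Fin n => p.1.val < p.2.val ∧ p.2.val ≤ k.val)
        ∪ (Finset.univ.filter fun p : Fin n × Fin n => k.val < p.1.val ∧ p.1.val < p.2.val) := by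
    ext p
    simp only [Finset.mem_filter, Finset.mem_union, Finset.mem_univ, true_and, hmem p,
      hv1 p, Fin.lt_def]
    constructor
    · rintro ⟨hlt, he⟩
      split_ifs at he <;> norm_num at he <;> omega
    · rintro (⟨hlt, hle⟩ | ⟨hlt1, hlt2⟩) <;> constructor <;>
        [exact hlt; skip; exact hlt2; skip] <;> split_ifs <;> norm_num <;> omega
  have hset2 : s.filter (fun p => B.repr (f2 p) k = 0)
      = (Finset.univ.filter fun p : Fin n × Fin n => k.val < p.1.val ∧ p.1.val < p.2.val) := by
    ext p
    simp only [Finset.mem_filter, Finset.mem_univ, true_and, hmem p, hv2 p, Fin.lt_def]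
    constructor
    · rintro ⟨hlt, he⟩
      split_ifs at he <;> norm_num at he <;> omega
    · rintro ⟨hlt1, hlt2⟩
      refine ⟨hlt2, ?_⟩
      split_ifs <;> norm_num <;> omega
  rw [hset1, hset2,
    Finset.card_union_of_disjoint (by
      rw [Finset.disjoint_left]
      rintro p hp1 hp2
      simp only [Finset.mem_filter, Finset.mem_univ, true_and] at hp1 hp2
      omega)]
  have hA := count_A n k.val (by omega)
  have hB2 := count_B n k.val (by omega)
  have hrw : (n - (k.val + 1)) * (n - 1 - (k.val + 1))
      = (n - 1 - k.val) * (n - 2 - k.val) := by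
    congr 1 <;> omega
  rw [hrw]
  obtain ⟨a, ha⟩ : ∃ a, (k.val + 1) * k.val = a := ⟨_, rfl⟩
  obtain ⟨b, hb⟩ : ∃ b, (n - 1 - k.val) * (n - 2 - k.val) = b := ⟨_, rfl⟩
  rw [ha] at hA ⊢
  rw [hb] at hB2 ⊢
  omega
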